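/- arXiv:1108.0027 — 3 statements merged into one kernel-verified Lean document; each statement's English description precedes it below -/
import Mathlib

section
/- The Pareto-Lognormal density f(x) = β x^{β−1} e^{−βμ + β²τ²/2} Φᶜ((log x − μ + βτ²)/τ) is the derivative of the Pareto-Lognormal CDF F(x) = Φ((log x − μ)/τ) + x^β e^{−βμ + β²τ²/2} Φᶜ((log x − μ + βτ²)/τ) for all x > 0. -/
open MeasureTheory Filter

noncomputable def Phi (x : ℝ) : ℝ :=
  ∫ t in Set.Iic x, (Real.sqrt (2 * Real.pi))⁻¹ * Real.exp (-t ^ 2 / 2)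

noncomputable def PhiC (x : ℝ) : ℝ := 1 - Phi x

noncomputable def erf (x : ℝ) : ℝ :=
  (2 / Real.sqrt Real.pi) * ∫ t in (0:ℝ)..x, Real.exp (-t ^ 2)

noncomputable def erfc (x : ℝ) : ℝ := 1 - erf x


noncomputable def plnPDF (β μ τ x : ℝ) : ℝ :=
  β * x ^ (β - 1) * Real.exp (-β * μ + β ^ 2 * τ ^ 2 / 2) *
    PhiC ((Real.log x - μ + β * τ ^ 2) / τ)

noncomputable def plnCDF (β μ τ x : ℝ) : ℝ :=
  Phi ((Real.log x - μ) / τ) + x ^ β * Real.exp (-β * μ + β ^ 2 * τ ^ 2 / 2) *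
    PhiC ((Real.log x - μ + β * τ ^ 2) / τ)

noncomputable def phi (t : ℝ) : ℝ := (Real.sqrt (2 * Real.pi))⁻¹ * Real.exp (-t ^ 2 / 2)

lemma phi_integrable : Integrable phi := by
  have h : Integrable fun t : ℝ => Real.exp (-(1/2 : ℝ) * t ^ 2) :=
    integrable_exp_neg_mul_sq (by norm_num)
  have := h.const_mul (Real.sqrt (2 * Real.pi))⁻¹
  refine this.congr (Filter.Eventually.of_forall fun t => ?_)
  unfold phi
  ring_nf

lemma phi_continuous : Continuous phi := by
  unfold phi
  continuity

lemma hasDerivAt_Phi (x : ℝ) : HasDerivAt Phi (phi x) x := by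
  have key : ∀ y : ℝ, Phi y = Phi 0 + ∫ t in (0:ℝ)..y, phi t := by
    intro y
    have := intervalIntegral.integral_Iic_sub_Iic
      (phi_integrable.integrableOn (s := Set.Iic 0))
      (phi_integrable.integrableOn (s := Set.Iic y)) (μ := volume)
    have h2 : Phi y - Phi 0 = ∫ t in (0:ℝ)..y, phi t := this
    linarith
  have hd : HasDerivAt (fun y => Phi 0 + ∫ t in (0:ℝ)..y, phi t) (phi x) x := by
    refine HasDerivAt.const_add _ ?_
    exact intervalIntegral.integral_hasDerivAt_right
      (phi_integrable.intervalIntegrable (a := 0) (b := x))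
      phi_continuous.aestronglyMeasurable.stronglyMeasurableAtFilter
      phi_continuous.continuousAt
  exact hd.congr_of_eventuallyEq (Filter.Eventually.of_forall key)

lemma key_ident (β μ τ x : ℝ) (hτ : 0 < τ) (hx : 0 < x) :
    phi ((Real.log x - μ) / τ) =
      x ^ β * Real.exp (-β * μ + β ^ 2 * τ ^ 2 / 2) *
        phi ((Real.log x - μ + β * τ ^ 2) / τ) := by
  unfold phi
  rw [Real.rpow_def_of_pos hx]
  rw [show Real.exp (Real.log x * β) * Real.exp (-β * μ + β ^ 2 * τ ^ 2 / 2) *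
      ((Real.sqrt (2 * Real.pi))⁻¹ * Real.exp (-((Real.log x - μ + β * τ ^ 2) / τ) ^ 2 / 2))
      = (Real.sqrt (2 * Real.pi))⁻¹ * Real.exp (Real.log x * β + (-β * μ + β ^ 2 * τ ^ 2 / 2)
          + -((Real.log x - μ + β * τ ^ 2) / τ) ^ 2 / 2) from by
      simp only [Real.exp_add]; ring]
  congr 1
  have hτ' : τ ≠ 0 := ne_of_gt hτ
  field_simp
  ring

theorem plnCDF_hasDerivAt (β μ τ : ℝ) (hβ : 0 < β) (hτ : 0 < τ) :
    ∀ x : ℝ, 0 < x → HasDerivAt (plnCDF β μ τ) (plnPDF β μ τ x) x := by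
  intro x hx
  have hx' : x ≠ 0 := ne_of_gt hx
  have hτ' : τ ≠ 0 := ne_of_gt hτ
  -- derivative of inner arguments
  have hg : HasDerivAt (fun y => (Real.log y - μ) / τ) (x⁻¹ / τ) x :=
    ((Real.hasDerivAt_log hx').sub_const μ).div_const τ
  have hh : HasDerivAt (fun y => (Real.log y - μ + β * τ ^ 2) / τ) (x⁻¹ / τ) x := by
    have := (((Real.hasDerivAt_log hx').sub_const μ).add_const (β * τ ^ 2)).div_const τ
    simpa using this
  have h1 : HasDerivAt (fun y => Phi ((Real.log y - μ) / τ))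
      (phi ((Real.log x - μ) / τ) * (x⁻¹ / τ)) x :=
    (hasDerivAt_Phi _).comp x hg
  have hPhiC : ∀ u : ℝ, HasDerivAt PhiC (-phi u) u := by
    intro u
    have := (hasDerivAt_const u (1:ℝ)).sub (hasDerivAt_Phi u)
    exact (by simpa using this : HasDerivAt ((fun _ => (1:ℝ)) - Phi) (-phi u) u)
  have h2 : HasDerivAt (fun y => PhiC ((Real.log y - μ + β * τ ^ 2) / τ))
      (-phi ((Real.log x - μ + β * τ ^ 2) / τ) * (x⁻¹ / τ)) x :=
    (hPhiC _).comp x hh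
  have h3 : HasDerivAt (fun y : ℝ => y ^ β) (β * x ^ (β - 1)) x :=
    Real.hasDerivAt_rpow_const (Or.inl hx')
  set C := Real.exp (-β * μ + β ^ 2 * τ ^ 2 / 2) with hC
  have h4 : HasDerivAt (fun y : ℝ => y ^ β * C) (β * x ^ (β - 1) * C) x :=
    h3.mul_const C
  have h5 : HasDerivAt (fun y : ℝ => y ^ β * C * PhiC ((Real.log y - μ + β * τ ^ 2) / τ))
      (β * x ^ (β - 1) * C * PhiC ((Real.log x - μ + β * τ ^ 2) / τ)
        + x ^ β * C * (-phi ((Real.log x - μ + β * τ ^ 2) / τ) * (x⁻¹ / τ))) x :=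
    h4.mul h2
  have h6 := h1.add h5
  have heq : plnCDF β μ τ = fun y => Phi ((Real.log y - μ) / τ)
      + y ^ β * C * PhiC ((Real.log y - μ + β * τ ^ 2) / τ) := rfl
  rw [heq]
  refine h6.congr_deriv ?_
  have hk := key_ident β μ τ x hτ hx
  unfold plnPDF
  rw [← hC, hk]
  ring
end

section
/- The Pareto-Lognormal CDF F(x) = Φ((log x − μ)/τ) + x^β e^{−βμ + β²τ²/2} Φᶜ((log x − μ + βτ²)/τ) satisfies F(x) → 0 as x → 0⁺ and F(x) → 1 as x → ∞. -/
open MeasureTheory Filter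

open Real in
lemma gauss_integrable :
    Integrable (fun t : ℝ => (Real.sqrt (2 * Real.pi))⁻¹ * Real.exp (-t ^ 2 / 2)) := by
  have h : (fun t : ℝ => (Real.sqrt (2 * π))⁻¹ * rexp (-t ^ 2 / 2)) =
      fun t : ℝ => (Real.sqrt (2 * π))⁻¹ * rexp (-(1/2 : ℝ) * t ^ 2) := by
    funext t; congr 1; ring_nf
  rw [h]
  exact (integrable_exp_neg_mul_sq (by norm_num)).const_mul _

open Real in
lemma gauss_total :
    (∫ t : ℝ, (Real.sqrt (2 * Real.pi))⁻¹ * Real.exp (-t ^ 2 / 2)) = 1 := by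
  have h : (fun t : ℝ => (Real.sqrt (2 * π))⁻¹ * rexp (-t ^ 2 / 2)) =
      fun t : ℝ => (Real.sqrt (2 * π))⁻¹ * rexp (-(1/2 : ℝ) * t ^ 2) := by
    funext t; congr 1; ring_nf
  rw [h, MeasureTheory.integral_const_mul, integral_gaussian]
  have h2 : (π / (1/2 : ℝ)) = 2 * π := by ring
  rw [h2]
  have : Real.sqrt (2 * π) ≠ 0 := by positivity
  field_simp

lemma Phi_nonneg (x : ℝ) : 0 ≤ Phi x :=
  MeasureTheory.integral_nonneg fun t => by positivity

lemma Phi_le_one (x : ℝ) : Phi x ≤ 1 := by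
  rw [← gauss_total]
  exact MeasureTheory.setIntegral_le_integral gauss_integrable
    (Filter.Eventually.of_forall fun t => by positivity)

lemma PhiC_nonneg (x : ℝ) : 0 ≤ PhiC x := by
  have := Phi_le_one x; simp [PhiC]; linarith

lemma PhiC_le_one (x : ℝ) : PhiC x ≤ 1 := by
  have := Phi_nonneg x; simp [PhiC]; linarith

lemma Phi_tendsto_atTop : Tendsto Phi atTop (nhds 1) := by
  have h := tendsto_setIntegral_of_monotone (μ := volume)
    (f := fun t : ℝ => (Real.sqrt (2 * Real.pi))⁻¹ * Real.exp (-t ^ 2 / 2))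
    (s := fun x : ℝ => Set.Iic x)
    (fun i => measurableSet_Iic) (fun i j hij => Set.Iic_subset_Iic.2 hij)
    (by rw [Set.iUnion_Iic]; exact gauss_integrable.integrableOn)
  rw [Set.iUnion_Iic, MeasureTheory.setIntegral_univ, gauss_total] at h
  exact h

lemma Phi_tendsto_atBot : Tendsto Phi atBot (nhds 0) := by
  have hempty : (⋂ n : ℝ, Set.Iic (-n)) = ∅ := by
    ext x
    simp only [Set.mem_iInter, Set.mem_Iic, Set.mem_empty_iff_false, iff_false, not_forall]
    exact ⟨-x + 1, by push_neg; linarith⟩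
  have h := tendsto_setIntegral_of_antitone (μ := volume)
    (f := fun t : ℝ => (Real.sqrt (2 * Real.pi))⁻¹ * Real.exp (-t ^ 2 / 2))
    (s := fun n : ℝ => Set.Iic (-n))
    (fun i => measurableSet_Iic)
    (fun i j hij => Set.Iic_subset_Iic.2 (by linarith))
    ⟨0, gauss_integrable.integrableOn⟩
  rw [hempty] at h
  simp only [MeasureTheory.setIntegral_empty] at h
  have : Phi = (fun n : ℝ => Phi (-n)) ∘ (fun x : ℝ => -x) := by
    funext x; simp [Function.comp]
  rw [this]
  exact h.comp tendsto_neg_atBot_atTop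

lemma PhiC_eq (a : ℝ) :
    PhiC a = ∫ t in Set.Ioi a, (Real.sqrt (2 * Real.pi))⁻¹ * Real.exp (-t ^ 2 / 2) := by
  have h := intervalIntegral.integral_Iic_add_Ioi (μ := volume) (b := a)
    gauss_integrable.integrableOn gauss_integrable.integrableOn
  rw [gauss_total] at h
  simp only [PhiC, Phi]
  linarith

open Real in
lemma PhiC_le {a : ℝ} (ha : 0 < a) :
    PhiC a ≤ (Real.sqrt (2 * Real.pi))⁻¹ * Real.exp (-a ^ 2 / 2) / a := by
  rw [PhiC_eq]
  set c : ℝ := (Real.sqrt (2 * π))⁻¹ with hc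
  have hc0 : 0 < c := by rw [hc]; positivity
  have hfun : (fun t : ℝ => (c * rexp (a ^ 2 / 2)) * rexp (-(a * t))) =
      fun t : ℝ => (c * rexp (a ^ 2 / 2)) * rexp (-a * t) := by
    funext t; rw [neg_mul]
  have key : (∫ t in Set.Ioi a, c * rexp (-t ^ 2 / 2)) ≤
      ∫ t in Set.Ioi a, (c * rexp (a ^ 2 / 2)) * rexp (-(a * t)) := by
    refine MeasureTheory.setIntegral_mono_on gauss_integrable.integrableOn
      (by rw [hfun]; exact (exp_neg_integrableOn_Ioi a ha).const_mul _)
      measurableSet_Ioi (fun t ht => ?_)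
    rw [mul_assoc, ← Real.exp_add]
    refine mul_le_mul_of_nonneg_left (Real.exp_le_exp.2 ?_) hc0.le
    nlinarith [sq_nonneg (t - a)]
  have hInt : (∫ t in Set.Ioi a, (c * rexp (a ^ 2 / 2)) * rexp (-(a * t)))
      = c * rexp (-a ^ 2 / 2) / a := by
    rw [MeasureTheory.integral_const_mul]
    have h2 : (∫ t in Set.Ioi a, rexp (-(a * t)))
        = a⁻¹ • ∫ t in Set.Ioi (a * a), rexp (-t) :=
      MeasureTheory.integral_comp_mul_left_Ioi (fun x => rexp (-x)) a ha
    rw [h2, integral_exp_neg_Ioi, smul_eq_mul, ← mul_assoc, mul_comm _ a⁻¹, ← mul_assoc]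
    rw [mul_assoc (a⁻¹ * c), ← Real.exp_add]
    have : a ^ 2 / 2 + -(a * a) = -a ^ 2 / 2 := by ring
    rw [this]
    field_simp
  calc (∫ t in Set.Ioi a, c * rexp (-t ^ 2 / 2)) ≤ _ := key
    _ = c * rexp (-a ^ 2 / 2) / a := hInt

open Real in
lemma tail_tendsto (β μ τ K : ℝ) (hβ : 0 < β) (hτ : 0 < τ) (hK : 0 ≤ K) :
    Tendsto (fun y : ℝ => rexp (β * y) * K * PhiC ((y - μ + β * τ ^ 2) / τ))
      atTop (nhds 0) := by
  set c : ℝ := (Real.sqrt (2 * π))⁻¹ with hc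
  have hc0 : 0 < c := by rw [hc]; positivity
  set a : ℝ → ℝ := fun y => (y - μ + β * τ ^ 2) / τ with ha
  have haT : Tendsto a atTop atTop := by
    apply Tendsto.atTop_div_const hτ
    have : (fun y : ℝ => y - μ + β * τ ^ 2) = fun y : ℝ => y + (-μ + β * τ ^ 2) := by
      funext y; ring
    rw [this]
    exact tendsto_atTop_add_const_right _ _ tendsto_id
  have hev : ∀ᶠ y in atTop, (1 : ℝ) ≤ a y := haT.eventually_ge_atTop 1
  -- the exponent tends to -infinity
  have hE : Tendsto (fun y : ℝ => β * y - (a y) ^ 2 / 2) atTop atBot := by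
    have heq : (fun y : ℝ => β * y - (a y) ^ 2 / 2) =
        fun y : ℝ => -((y - μ) ^ 2 / (2 * τ ^ 2)) +
          (μ ^ 2 - (-μ + β * τ ^ 2) ^ 2) / (2 * τ ^ 2) := by
      funext y
      rw [ha]
      field_simp
      ring
    rw [heq]
    apply tendsto_atBot_add_const_right
    apply tendsto_neg_atTop_atBot.comp
    apply Tendsto.atTop_div_const (by positivity)
    exact (tendsto_pow_atTop (two_ne_zero)).comp (tendsto_atTop_add_const_right _ _ tendsto_id)
  have hg : Tendsto (fun y : ℝ => K * c * rexp (β * y - (a y) ^ 2 / 2)) atTop (nhds 0) := by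
    have := (Real.tendsto_exp_atBot.comp hE).const_mul (K * c)
    simpa using this
  refine squeeze_zero' ?_ ?_ hg
  · filter_upwards with y
    exact mul_nonneg (mul_nonneg (Real.exp_pos _).le hK) (PhiC_nonneg _)
  · filter_upwards [hev] with y hy
    have h1 : PhiC (a y) ≤ c * rexp (-(a y) ^ 2 / 2) / a y := PhiC_le (by linarith)
    have h2 : c * rexp (-(a y) ^ 2 / 2) / a y ≤ c * rexp (-(a y) ^ 2 / 2) :=
      div_le_self (by positivity) hy
    calc rexp (β * y) * K * PhiC (a y)
        ≤ rexp (β * y) * K * (c * rexp (-(a y) ^ 2 / 2)) := by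
          refine mul_le_mul_of_nonneg_left (h1.trans h2) ?_
          exact mul_nonneg (Real.exp_pos _).le hK
      _ = K * c * rexp (β * y - (a y) ^ 2 / 2) := by
          rw [show β * y - (a y) ^ 2 / 2 = β * y + -(a y) ^ 2 / 2 by ring, Real.exp_add]
          ring

theorem plnCDF_limits (β μ τ : ℝ) (hβ : 0 < β) (hτ : 0 < τ) :
    Tendsto (plnCDF β μ τ) (nhdsWithin 0 (Set.Ioi 0)) (nhds 0) ∧
    Tendsto (plnCDF β μ τ) atTop (nhds 1) := by
  set K : ℝ := Real.exp (-β * μ + β ^ 2 * τ ^ 2 / 2) with hK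
  have hK0 : (0:ℝ) ≤ K := (Real.exp_pos _).le
  have heq : plnCDF β μ τ = fun x : ℝ => Phi ((Real.log x - μ) / τ) +
      x ^ β * K * PhiC ((Real.log x - μ + β * τ ^ 2) / τ) := rfl
  constructor
  · have h1 : Tendsto (fun x : ℝ => Phi ((Real.log x - μ) / τ))
        (nhdsWithin 0 (Set.Ioi 0)) (nhds 0) := by
      refine Phi_tendsto_atBot.comp ?_
      refine Tendsto.atBot_div_const hτ ?_
      simp only [sub_eq_add_neg]
      exact tendsto_atBot_add_const_right _ _ Real.tendsto_log_nhdsGT_zero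
    have h2 : Tendsto (fun x : ℝ => x ^ β * K * PhiC ((Real.log x - μ + β * τ ^ 2) / τ))
        (nhdsWithin 0 (Set.Ioi 0)) (nhds 0) := by
      have hr : Tendsto (fun x : ℝ => x ^ β * K) (nhdsWithin 0 (Set.Ioi 0)) (nhds 0) := by
        have := ((Real.continuousAt_rpow_const 0 β (Or.inr hβ.le)).tendsto.mono_left
          (nhdsWithin_le_nhds (s := Set.Ioi (0:ℝ)))).mul_const K
        simpa [Real.zero_rpow hβ.ne'] using this
      refine squeeze_zero' ?_ ?_ hr
      · filter_upwards [self_mem_nhdsWithin] with x (hx : x ∈ Set.Ioi 0)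
        exact mul_nonneg (mul_nonneg (Real.rpow_nonneg (le_of_lt hx) β) hK0) (PhiC_nonneg _)
      · filter_upwards [self_mem_nhdsWithin] with x (hx : x ∈ Set.Ioi 0)
        have h0 : (0:ℝ) ≤ x ^ β * K := mul_nonneg (Real.rpow_nonneg (le_of_lt hx) β) hK0
        calc x ^ β * K * PhiC ((Real.log x - μ + β * τ ^ 2) / τ)
            ≤ x ^ β * K * 1 := mul_le_mul_of_nonneg_left (PhiC_le_one _) h0
          _ = x ^ β * K := mul_one _
    rw [heq]
    simpa using h1.add h2
  · have h1 : Tendsto (fun x : ℝ => Phi ((Real.log x - μ) / τ)) atTop (nhds 1) := by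
      refine Phi_tendsto_atTop.comp ?_
      refine Tendsto.atTop_div_const hτ ?_
      simp only [sub_eq_add_neg]
      exact tendsto_atTop_add_const_right _ _ Real.tendsto_log_atTop
    have h2 : Tendsto (fun x : ℝ => x ^ β * K * PhiC ((Real.log x - μ + β * τ ^ 2) / τ))
        atTop (nhds 0) := by
      have hG := (tail_tendsto β μ τ K hβ hτ hK0).comp Real.tendsto_log_atTop
      refine hG.congr' ?_
      filter_upwards [eventually_gt_atTop (0:ℝ)] with x hx
      simp only [Function.comp]
      rw [Real.rpow_def_of_pos hx]
      ring_nf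
    rw [heq]
    simpa using h1.add h2
end

section
/- If X = e^{μ + τ·G − E} where G ~ N(0,1) and E is exponential with rate β, independent, then X has the Pareto-Lognormal distribution with CDF F(x) = Φ((log x − μ)/τ) + x^β e^{−βμ+β²τ²/2} Φᶜ((log x − μ + βτ²)/τ). -/
open MeasureTheory Filter

section aux
open Real Set ProbabilityTheory

lemma expMeasure_apply' (β : ℝ) (s : Set ℝ) :
    expMeasure β s = ∫⁻ y in s, exponentialPDF β y := by
  rw [expMeasure, gammaMeasure, withDensity_apply' _ s]; rfl

lemma expMeasure_Ici (β : ℝ) (hβ : 0 < β) (t : ℝ) :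
    expMeasure β (Ici t) = ENNReal.ofReal (Real.exp (-β * max t 0)) := by
  have hprob : IsProbabilityMeasure (expMeasure β) := isProbabilityMeasure_expMeasure hβ
  have hsing : expMeasure β {t} = 0 := by
    rw [expMeasure_apply']
    exact setLIntegral_measure_zero _ _ (measure_singleton t)
  have heq : expMeasure β (Iio t) = expMeasure β (Iic t) := by
    refine le_antisymm (measure_mono Iio_subset_Iic_self) ?_
    rw [← Iio_union_right]
    exact (measure_union_le _ _).trans (by rw [hsing, add_zero])
  have hIio : expMeasure β (Iio t)
      = ENNReal.ofReal (if 0 ≤ t then 1 - Real.exp (-(β * t)) else 0) := by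
    rw [heq, expMeasure_apply']
    exact lintegral_exponentialPDF_eq_antiDeriv hβ t
  have hcompl : expMeasure β (Ici t) = 1 - expMeasure β (Iio t) := by
    rw [← Set.compl_Iio, measure_compl measurableSet_Iio (measure_ne_top _ _), measure_univ]
  rw [hcompl, hIio]
  split_ifs with h
  · have he1 : Real.exp (-(β * t)) ≤ 1 := Real.exp_le_one_iff.mpr (by nlinarith)
    rw [max_eq_left h, ← ENNReal.ofReal_one, ← ENNReal.ofReal_sub _ (by linarith)]
    congr 1
    rw [neg_mul]; ring
  · rw [max_eq_right (le_of_not_ge h), mul_zero, Real.exp_zero, ENNReal.ofReal_zero, tsub_zero,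
      ENNReal.ofReal_one]

lemma gpdf_eq : gaussianPDFReal 0 1
    = fun t : ℝ ↦ (Real.sqrt (2 * Real.pi))⁻¹ * Real.exp (-t ^ 2 / 2) := by
  funext t
  simp [gaussianPDFReal, sub_zero]

lemma integral_gpdf : ∫ t, (Real.sqrt (2 * Real.pi))⁻¹ * Real.exp (-t ^ 2 / 2) = 1 := by
  rw [← gpdf_eq]
  exact integral_gaussianPDFReal_eq_one 0 one_ne_zero

lemma integrable_gpdf :
    Integrable (fun t : ℝ ↦ (Real.sqrt (2 * Real.pi))⁻¹ * Real.exp (-t ^ 2 / 2)) := by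
  rw [← gpdf_eq]; exact integrable_gaussianPDFReal 0 1

lemma integral_Ioi_gpdf (a : ℝ) :
    ∫ t in Set.Ioi a, (Real.sqrt (2 * Real.pi))⁻¹ * Real.exp (-t ^ 2 / 2) = 1 - Phi a := by
  have h := integral_add_compl (measurableSet_Iic (a := a)) integrable_gpdf
  rw [Set.compl_Iic] at h
  rw [← integral_gpdf, ← h, Phi]
  ring

lemma integral_Ioi_shift (f : ℝ → ℝ) (a k : ℝ) :
    ∫ g in Set.Ioi a, f (g + k) = ∫ g in Set.Ioi (a + k), f g := by
  have hpre : (· + k) ⁻¹' Set.Ioi (a + k) = Set.Ioi a := by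
    ext g; simp
  have := (measurePreserving_add_right volume k).setIntegral_preimage_emb
    (MeasurableEquiv.addRight k).measurableEmbedding f (Set.Ioi (a + k))
  rwa [hpre] at this

variable (β μ τ x : ℝ)

lemma h_cont : Continuous (fun g : ℝ ↦ Real.exp (-β * max (μ + τ * g - Real.log x) 0)) := by
  fun_prop

lemma h_le_one (g : ℝ) (hβ : 0 < β) :
    Real.exp (-β * max (μ + τ * g - Real.log x) 0) ≤ 1 := by
  rw [Real.exp_le_one_iff]
  have : 0 ≤ max (μ + τ * g - Real.log x) 0 := le_max_right _ _
  nlinarith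

lemma integrable_hgpdf (hβ : 0 < β) :
    Integrable (fun g : ℝ ↦ Real.exp (-β * max (μ + τ * g - Real.log x) 0) *
      ((Real.sqrt (2 * Real.pi))⁻¹ * Real.exp (-g ^ 2 / 2))) := by
  refine Integrable.mono integrable_gpdf
    (((h_cont β μ τ x).mul (by fun_prop)).aestronglyMeasurable) (ae_of_all _ fun g ↦ ?_)
  have h1 : (0:ℝ) ≤ (Real.sqrt (2 * Real.pi))⁻¹ * Real.exp (-g ^ 2 / 2) := by positivity
  rw [Real.norm_eq_abs, Real.norm_eq_abs, abs_of_nonneg (by positivity), abs_of_nonneg h1]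
  nlinarith [h_le_one β μ τ x g hβ, Real.exp_pos (-β * max (μ + τ * g - Real.log x) 0)]

lemma main_integral (hβ : 0 < β) (hτ : 0 < τ) (hx : 0 < x) :
    ∫ g : ℝ, Real.exp (-β * max (μ + τ * g - Real.log x) 0) *
        ((Real.sqrt (2 * Real.pi))⁻¹ * Real.exp (-g ^ 2 / 2))
      = Phi ((Real.log x - μ) / τ) + x ^ β * Real.exp (-β * μ + β ^ 2 * τ ^ 2 / 2) *
          (1 - Phi ((Real.log x - μ + β * τ ^ 2) / τ)) := by
  set a := (Real.log x - μ) / τ with ha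
  set k := β * τ with hk
  have hsplit := integral_add_compl (measurableSet_Iic (a := a)) (integrable_hgpdf β μ τ x hβ)
  rw [Set.compl_Iic] at hsplit
  rw [← hsplit]
  have hIic : ∫ g in Set.Iic a, Real.exp (-β * max (μ + τ * g - Real.log x) 0) *
      ((Real.sqrt (2 * Real.pi))⁻¹ * Real.exp (-g ^ 2 / 2)) = Phi a := by
    rw [Phi]
    refine setIntegral_congr_fun measurableSet_Iic fun g hg ↦ ?_
    have hg' : μ + τ * g - Real.log x ≤ 0 := by
      rw [Set.mem_Iic, ha, le_div_iff₀ hτ] at hg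
      nlinarith
    rw [max_eq_right hg', mul_zero, Real.exp_zero, one_mul]
  have hIoi : ∫ g in Set.Ioi a, Real.exp (-β * max (μ + τ * g - Real.log x) 0) *
      ((Real.sqrt (2 * Real.pi))⁻¹ * Real.exp (-g ^ 2 / 2))
      = x ^ β * Real.exp (-β * μ + β ^ 2 * τ ^ 2 / 2) * (1 - Phi (a + k)) := by
    have hcong : ∀ g ∈ Set.Ioi a, Real.exp (-β * max (μ + τ * g - Real.log x) 0) *
        ((Real.sqrt (2 * Real.pi))⁻¹ * Real.exp (-g ^ 2 / 2))
        = x ^ β * Real.exp (-β * μ + β ^ 2 * τ ^ 2 / 2) *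
          ((Real.sqrt (2 * Real.pi))⁻¹ * Real.exp (-(g + k) ^ 2 / 2)) := by
      intro g hg
      have hg' : 0 ≤ μ + τ * g - Real.log x := by
        rw [Set.mem_Ioi, ha, div_lt_iff₀ hτ] at hg
        nlinarith
      have key : Real.exp (-β * (μ + τ * g - Real.log x)) * Real.exp (-g ^ 2 / 2)
          = Real.exp (Real.log x * β) * Real.exp (-β * μ + β ^ 2 * τ ^ 2 / 2)
            * Real.exp (-(g + k) ^ 2 / 2) := by
        rw [← Real.exp_add, ← Real.exp_add, ← Real.exp_add]
        congr 1
        rw [hk]; ring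
      rw [max_eq_left hg', Real.rpow_def_of_pos hx]
      linear_combination (Real.sqrt (2 * Real.pi))⁻¹ * key
    rw [setIntegral_congr_fun measurableSet_Ioi hcong, integral_const_mul,
      integral_Ioi_shift (fun t : ℝ ↦ (Real.sqrt (2 * Real.pi))⁻¹ * Real.exp (-t ^ 2 / 2)) a k,
      integral_Ioi_gpdf]
  rw [hIic, hIoi]
  have hak : a + k = (Real.log x - μ + β * τ ^ 2) / τ := by
    field_simp [ha, hk]
    rw [ha, hk, add_mul, div_mul_cancel₀ _ hτ.ne']; ring
  rw [hak]

end aux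

theorem pln_generation (β μ τ : ℝ) (hβ : 0 < β) (hτ : 0 < τ) (x : ℝ) (hx : 0 < x) :
    ((ProbabilityTheory.gaussianReal 0 1).prod (ProbabilityTheory.expMeasure β))
        {p : ℝ × ℝ | Real.exp (μ + τ * p.1 - p.2) ≤ x} =
      ENNReal.ofReal (plnCDF β μ τ x) := by
  classical
  have : IsProbabilityMeasure (ProbabilityTheory.expMeasure β) :=
    ProbabilityTheory.isProbabilityMeasure_expMeasure hβ
  have hset : {p : ℝ × ℝ | Real.exp (μ + τ * p.1 - p.2) ≤ x}
      = {p : ℝ × ℝ | μ + τ * p.1 - Real.log x ≤ p.2} := by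
    ext p
    simp only [Set.mem_setOf_eq]
    rw [← Real.exp_log hx, Real.exp_le_exp, Real.exp_log hx]
    constructor <;> intro h <;> linarith
  have hS : MeasurableSet {p : ℝ × ℝ | μ + τ * p.1 - Real.log x ≤ p.2} :=
    measurableSet_le (by fun_prop) (by fun_prop)
  rw [hset, MeasureTheory.Measure.prod_apply hS]
  have hslice : ∀ g : ℝ, (Prod.mk g ⁻¹' {p : ℝ × ℝ | μ + τ * p.1 - Real.log x ≤ p.2})
      = Set.Ici (μ + τ * g - Real.log x) := fun g ↦ rfl
  have h1 : ∫⁻ g, ProbabilityTheory.expMeasure β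
        (Prod.mk g ⁻¹' {p : ℝ × ℝ | μ + τ * p.1 - Real.log x ≤ p.2})
        ∂(ProbabilityTheory.gaussianReal 0 1)
      = ∫⁻ g, ENNReal.ofReal (Real.exp (-β * max (μ + τ * g - Real.log x) 0))
        ∂(ProbabilityTheory.gaussianReal 0 1) := by
    refine lintegral_congr fun g ↦ ?_
    rw [hslice g, expMeasure_Ici β hβ]
  rw [h1, ProbabilityTheory.gaussianReal_of_var_ne_zero 0 one_ne_zero,
    lintegral_withDensity_eq_lintegral_mul _ (ProbabilityTheory.measurable_gaussianPDF 0 1)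
      ((h_cont β μ τ x).measurable.ennreal_ofReal)]
  have h2 : ∀ g : ℝ, (ProbabilityTheory.gaussianPDF 0 1 * fun g ↦
        ENNReal.ofReal (Real.exp (-β * max (μ + τ * g - Real.log x) 0))) g
      = ENNReal.ofReal (Real.exp (-β * max (μ + τ * g - Real.log x) 0) *
          ((Real.sqrt (2 * Real.pi))⁻¹ * Real.exp (-g ^ 2 / 2))) := by
    intro g
    simp only [Pi.mul_apply, ProbabilityTheory.gaussianPDF, gpdf_eq]
    rw [← ENNReal.ofReal_mul (by positivity), mul_comm]
  rw [lintegral_congr h2, ← ofReal_integral_eq_lintegral_ofReal (integrable_hgpdf β μ τ x hβ)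
    (ae_of_all _ fun g ↦ by positivity)]
  rw [main_integral β μ τ x hβ hτ hx]
  rfl
end
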